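/- Let Φ : X × Y → ℝ. There exist functions u : X → ℝ and v : Y → ℝ with u(x) + v(y) ≥ Φ(x,y) for all (x,y) attaining the infimum of Σ_x p(x) u(x) + Σ_y q(y) v(y) over all such pairs; and for any such optimal pair (u,v), a coupling π ∈ M(p,q) attains the maximum of Σ_{x,y} π(x,y) Φ(x,y) over M(p,q) if and only if π(x,y) = 0 whenever u(x) + v(y) > Φ(x,y). -/

import Mathlib

open Finset Real

/-- A coupling of the probability mass functions `p` and `q`. -/
def IsCoupling {X Y : Type*} [Fintype X] [Fintype Y]
    (p : X → ℝ) (q : Y → ℝ) (μ : X × Y → ℝ) : Prop :=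
  (∀ z, 0 ≤ μ z) ∧ (∀ x, ∑ y, μ (x, y) = p x) ∧ (∀ y, ∑ x, μ (x, y) = q y)

/-- Mutual information of a coupling (with `0 log 0 = 0`, which holds since `Real.log 0 = 0`). -/
noncomputable def mutualInfo {X Y : Type*} [Fintype X] [Fintype Y]
    (p : X → ℝ) (q : Y → ℝ) (μ : X × Y → ℝ) : ℝ :=
  ∑ x, ∑ y, μ (x, y) * Real.log (μ (x, y) / (p x * q y))

/-- Shannon entropy of a probability mass function. -/
noncomputable def entropy {Z : Type*} [Fintype Z] (p : Z → ℝ) : ℝ :=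
  -∑ z, p z * Real.log (p z)

set_option linter.unusedSectionVars false

namespace KDual

variable {X Y : Type*} [Fintype X] [Fintype Y] [Nonempty X] [Nonempty Y]

noncomputable def Uv (Φ : X × Y → ℝ) (v : Y → ℝ) (x : X) : ℝ :=
  Finset.univ.sup' Finset.univ_nonempty (fun y => Φ (x, y) - v y)

lemma le_Uv (Φ : X × Y → ℝ) (v : Y → ℝ) (x : X) (y : Y) : Φ (x, y) - v y ≤ Uv Φ v x := by
  unfold Uv; exact Finset.le_sup' (fun y => Φ (x, y) - v y) (Finset.mem_univ y)

lemma Uv_feasible (Φ : X × Y → ℝ) (v : Y → ℝ) (x : X) (y : Y) : Φ (x, y) ≤ Uv Φ v x + v y := by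
  have := le_Uv Φ v x y; linarith

lemma Uv_le (Φ : X × Y → ℝ) (v : Y → ℝ) (u : X → ℝ) (h : ∀ x y, Φ (x, y) ≤ u x + v y) (x : X) :
    Uv Φ v x ≤ u x := by
  unfold Uv; exact Finset.sup'_le _ _ (fun y _ => by have := h x y; linarith)

noncomputable def Fv (p : X → ℝ) (q : Y → ℝ) (Φ : X × Y → ℝ) (v : Y → ℝ) : ℝ :=
  ∑ x, p x * Uv Φ v x + ∑ y, q y * v y

lemma coupling_split (p : X → ℝ) (q : Y → ℝ) (μ : X × Y → ℝ)
    (h1 : ∀ x, ∑ y, μ (x, y) = p x) (h2 : ∀ y, ∑ x, μ (x, y) = q y) (u : X → ℝ) (v : Y → ℝ) :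
    ∑ x, ∑ y, μ (x, y) * (u x + v y) = ∑ x, p x * u x + ∑ y, q y * v y := by
  calc ∑ x, ∑ y, μ (x, y) * (u x + v y)
      = ∑ x, (∑ y, μ (x, y) * u x + ∑ y, μ (x, y) * v y) := by
        refine Finset.sum_congr rfl fun x _ => ?_
        rw [← Finset.sum_add_distrib]
        exact Finset.sum_congr rfl fun y _ => by ring
    _ = ∑ x, (∑ y, μ (x, y) * u x) + ∑ x, ∑ y, μ (x, y) * v y := Finset.sum_add_distrib
    _ = ∑ x, p x * u x + ∑ y, q y * v y := by
        congr 1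
        · refine Finset.sum_congr rfl fun x _ => ?_
          rw [← Finset.sum_mul, h1]
        · rw [Finset.sum_comm]
          refine Finset.sum_congr rfl fun y _ => ?_
          rw [← Finset.sum_mul, h2]

lemma weak_duality (p : X → ℝ) (q : Y → ℝ) (Φ : X × Y → ℝ) (μ : X × Y → ℝ)
    (h0 : ∀ z, 0 ≤ μ z) (h1 : ∀ x, ∑ y, μ (x, y) = p x) (h2 : ∀ y, ∑ x, μ (x, y) = q y)
    (u : X → ℝ) (v : Y → ℝ) (hf : ∀ x y, Φ (x, y) ≤ u x + v y) :
    ∑ x, ∑ y, μ (x, y) * Φ (x, y) ≤ ∑ x, p x * u x + ∑ y, q y * v y := by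
  rw [← coupling_split p q μ h1 h2 u v]
  refine Finset.sum_le_sum fun x _ => Finset.sum_le_sum fun y _ =>
    mul_le_mul_of_nonneg_left (hf x y) (h0 (x, y))

lemma slack_value (p : X → ℝ) (q : Y → ℝ) (Φ : X × Y → ℝ) (μ : X × Y → ℝ)
    (h1 : ∀ x, ∑ y, μ (x, y) = p x) (h2 : ∀ y, ∑ x, μ (x, y) = q y)
    (u : X → ℝ) (v : Y → ℝ) (hf : ∀ x y, Φ (x, y) ≤ u x + v y)
    (hs : ∀ x y, Φ (x, y) < u x + v y → μ (x, y) = 0) :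
    ∑ x, ∑ y, μ (x, y) * Φ (x, y) = ∑ x, p x * u x + ∑ y, q y * v y := by
  rw [← coupling_split p q μ h1 h2 u v]
  refine Finset.sum_congr rfl fun x _ => Finset.sum_congr rfl fun y _ => ?_
  rcases eq_or_lt_of_le (hf x y) with h | h
  · rw [h]
  · rw [hs x y h]; ring

lemma sup'_add_const (f : Y → ℝ) (c : ℝ) :
    (univ.sup' univ_nonempty fun y => f y + c) = (univ.sup' univ_nonempty f) + c := by
  apply le_antisymm
  · exact Finset.sup'_le _ _ fun y _ =>
      add_le_add_left (Finset.le_sup' f (mem_univ y)) c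
  · have h : univ.sup' univ_nonempty f ≤ (univ.sup' univ_nonempty fun y => f y + c) - c := by
      refine Finset.sup'_le _ _ fun y _ => ?_
      have := Finset.le_sup' (fun y => f y + c) (mem_univ y)
      linarith
    linarith

lemma Uv_shift (Φ : X × Y → ℝ) (v : Y → ℝ) (c : ℝ) (x : X) :
    Uv Φ (fun y => v y - c) x = Uv Φ v x + c := by
  unfold Uv
  have h : (fun y => Φ (x, y) - (fun y => v y - c) y) = fun y => (Φ (x, y) - v y) + c := by
    funext y; simp; ring
  rw [h, sup'_add_const]

lemma Fv_shift (p : X → ℝ) (q : Y → ℝ) (Φ : X × Y → ℝ) (hps : ∑ x, p x = 1)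
    (hqs : ∑ y, q y = 1) (v : Y → ℝ) (c : ℝ) :
    Fv p q Φ (fun y => v y - c) = Fv p q Φ v := by
  unfold Fv
  have h1 : ∑ x, p x * Uv Φ (fun y => v y - c) x = ∑ x, p x * Uv Φ v x + c := by
    calc ∑ x, p x * Uv Φ (fun y => v y - c) x
        = ∑ x, (p x * Uv Φ v x + p x * c) := by
          refine Finset.sum_congr rfl fun x _ => ?_
          rw [Uv_shift]; ring
      _ = ∑ x, p x * Uv Φ v x + (∑ x, p x) * c := by
          rw [Finset.sum_add_distrib, Finset.sum_mul]
      _ = ∑ x, p x * Uv Φ v x + c := by rw [hps, one_mul]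
  have h2 : ∑ y, q y * (v y - c) = ∑ y, q y * v y - c := by
    calc ∑ y, q y * (v y - c) = ∑ y, q y * v y - (∑ y, q y) * c := by
          rw [Finset.sum_mul, ← Finset.sum_sub_distrib]
          exact Finset.sum_congr rfl fun y _ => by ring
      _ = ∑ y, q y * v y - c := by rw [hqs, one_mul]
  rw [h1, h2]; ring

lemma Fv_coercive (p : X → ℝ) (q : Y → ℝ) (hp : ∀ x, 0 < p x) (hq : ∀ y, 0 < q y)
    (hps : ∑ x, p x = 1) (hqsY : ∑ y, q y = 1) (Φ : X × Y → ℝ) (y₀ : Y) (v : Y → ℝ) (h0 : v y₀ = 0) :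
    (univ.inf' univ_nonempty Φ) + (univ.inf' univ_nonempty q) * ‖v‖ ≤ Fv p q Φ v := by
  set C := univ.inf' univ_nonempty Φ with hCdef
  set qm := univ.inf' univ_nonempty q with hqmdef
  have hC : ∀ z, C ≤ Φ z := fun z => Finset.inf'_le _ (mem_univ z)
  have hqm : ∀ y, qm ≤ q y := fun y => Finset.inf'_le _ (mem_univ y)
  have hqm0 : 0 < qm := by
    obtain ⟨y, -, hy⟩ := Finset.exists_mem_eq_inf' univ_nonempty q
    rw [hqmdef, hy]; exact hq y
  obtain ⟨yM, -, hyM⟩ := Finset.exists_max_image univ v univ_nonempty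
  obtain ⟨ym, -, hym⟩ := Finset.exists_min_image univ v univ_nonempty
  have hyM' : ∀ y, v y ≤ v yM := fun y => hyM y (mem_univ y)
  have hym' : ∀ y, v ym ≤ v y := fun y => hym y (mem_univ y)
  have hm0 : v ym ≤ 0 := by have := hym' y₀; linarith
  have hM0 : 0 ≤ v yM := by have := hyM' y₀; linarith
  have hnorm : ‖v‖ ≤ v yM - v ym := by
    rw [pi_norm_le_iff_of_nonneg (by linarith)]
    intro y
    rw [Real.norm_eq_abs, abs_le]
    have h1 := hym' y; have h2 := hyM' y
    constructor <;> linarith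
  have stepA : C - v ym ≤ ∑ x, p x * Uv Φ v x := by
    have key : ∀ x, C - v ym ≤ Uv Φ v x := fun x => by
      have h1 := hC (x, ym); have h2 := le_Uv Φ v x ym; linarith
    calc C - v ym = ∑ x, p x * (C - v ym) := by
          rw [← Finset.sum_mul, hps, one_mul]
      _ ≤ ∑ x, p x * Uv Φ v x :=
          Finset.sum_le_sum fun x _ => mul_le_mul_of_nonneg_left (key x) (hp x).le
  have stepB : q yM * (v yM - v ym) + v ym ≤ ∑ y, q y * v y := by
    have hqs' : ∑ y, q y * (v y - v ym) = ∑ y, q y * v y - (∑ y, q y) * v ym := by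
      rw [Finset.sum_mul, ← Finset.sum_sub_distrib]
      exact Finset.sum_congr rfl fun y _ => by ring
    have hsingle : q yM * (v yM - v ym) ≤ ∑ y, q y * (v y - v ym) :=
      Finset.single_le_sum (f := fun y => q y * (v y - v ym))
        (fun y _ => mul_nonneg (hq y).le (by have := hym' y; linarith)) (mem_univ yM)
    have hqsum : ∑ y, q y = 1 := hqsY
    rw [hqsum, one_mul] at hqs'
    linarith
  have hlast : qm * ‖v‖ ≤ q yM * (v yM - v ym) := by
    have h1 : qm * ‖v‖ ≤ qm * (v yM - v ym) := mul_le_mul_of_nonneg_left hnorm hqm0.le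
    have h2 : qm * (v yM - v ym) ≤ q yM * (v yM - v ym) :=
      mul_le_mul_of_nonneg_right (hqm yM) (by linarith)
    linarith
  unfold Fv
  linarith

lemma Fv_continuous (p : X → ℝ) (q : Y → ℝ) (Φ : X × Y → ℝ) :
    Continuous (Fv p q Φ) := by
  have hUx : ∀ x, Continuous fun v : Y → ℝ => Uv Φ v x := fun x =>
    Continuous.finset_sup'_apply univ_nonempty
      (fun y _ => continuous_const.sub (continuous_apply y))
  exact (continuous_finset_sum univ fun x _ => continuous_const.mul (hUx x)).add
    (continuous_finset_sum univ fun y _ => continuous_const.mul (continuous_apply y))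

lemma exists_min_Fv (p : X → ℝ) (q : Y → ℝ) (hp : ∀ x, 0 < p x) (hq : ∀ y, 0 < q y)
    (hps : ∑ x, p x = 1) (hqs : ∑ y, q y = 1) (Φ : X × Y → ℝ) :
    ∃ v₀ : Y → ℝ, ∀ v, Fv p q Φ v₀ ≤ Fv p q Φ v := by
  obtain ⟨y₀⟩ := ‹Nonempty Y›
  set C := univ.inf' univ_nonempty Φ with hCdef
  set qm := univ.inf' univ_nonempty q with hqmdef
  have hqm0 : 0 < qm := by
    obtain ⟨y, -, hy⟩ := Finset.exists_mem_eq_inf' univ_nonempty q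
    rw [hqmdef, hy]; exact hq y
  set R := max 0 ((Fv p q Φ 0 - C) / qm) + 1 with hRdef
  have hR0 : (0:ℝ) ≤ R := by positivity
  set S := Metric.closedBall (0 : Y → ℝ) R ∩ {v | v y₀ = 0} with hSdef
  have hScpt : IsCompact S :=
    (isCompact_closedBall (0 : Y → ℝ) R).inter_right
      (isClosed_eq (continuous_apply y₀) continuous_const)
  have hS0 : (0 : Y → ℝ) ∈ S := ⟨Metric.mem_closedBall_self hR0, rfl⟩
  obtain ⟨v₀, hv₀S, hv₀⟩ :=
    hScpt.exists_isMinOn ⟨0, hS0⟩ (Fv_continuous p q Φ).continuousOn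
  refine ⟨v₀, fun v => ?_⟩
  set w := fun y => v y - v y₀ with hwdef
  have hw0 : w y₀ = 0 := sub_self _
  have hFw : Fv p q Φ w = Fv p q Φ v := Fv_shift p q Φ hps hqs v (v y₀)
  by_cases hcase : ‖w‖ ≤ R
  · have hwS : w ∈ S := ⟨mem_closedBall_zero_iff.mpr hcase, hw0⟩
    have := isMinOn_iff.mp hv₀ w hwS
    linarith
  · push_neg at hcase
    have h1 := Fv_coercive p q hp hq hps hqs Φ y₀ w hw0
    have h2 : Fv p q Φ v₀ ≤ Fv p q Φ 0 := isMinOn_iff.mp hv₀ 0 hS0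
    have h3 : (Fv p q Φ 0 - C) / qm < ‖w‖ := by
      have hmax : (Fv p q Φ 0 - C) / qm ≤ R := by
        rw [hRdef]
        have := le_max_right (0:ℝ) ((Fv p q Φ 0 - C) / qm)
        linarith
      exact hmax.trans_lt hcase
    have h4 : Fv p q Φ 0 - C < qm * ‖w‖ := by
      rw [div_lt_iff₀ hqm0] at h3; linarith
    linarith

lemma exists_complementary_coupling (p : X → ℝ) (q : Y → ℝ) (hp : ∀ x, 0 < p x)
    (hq : ∀ y, 0 < q y) (hps : ∑ x, p x = 1) (hqs : ∑ y, q y = 1) (Φ : X × Y → ℝ) (v : Y → ℝ)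
    (hmin : ∀ v', Fv p q Φ v ≤ Fv p q Φ v') :
    ∃ μ : X × Y → ℝ, (∀ z, 0 ≤ μ z) ∧ (∀ x, ∑ y, μ (x, y) = p x) ∧
      (∀ y, ∑ x, μ (x, y) = q y) ∧
      (∀ x y, Φ (x, y) < Uv Φ v x + v y → μ (x, y) = 0) := by
  classical
  set u := Uv Φ v with hu
  set A : X → Finset Y := fun x => univ.filter (fun y => u x = Φ (x, y) - v y) with hA
  have hmemA : ∀ x y, y ∈ A x ↔ u x = Φ (x, y) - v y := by
    intro x y; rw [hA]; simp
  have hAne : ∀ x, (A x).Nonempty := by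
    intro x
    obtain ⟨y, -, hy⟩ := Finset.exists_mem_eq_sup' (univ_nonempty)
      (fun y => Φ (x, y) - v y)
    exact ⟨y, (hmemA x y).mpr hy⟩
  have hnotA : ∀ x y, Φ (x, y) < u x + v y → y ∉ A x := by
    intro x y h hyA
    rw [hmemA] at hyA
    linarith
  set P : Finset (X × Y) := univ.filter (fun z => z.2 ∉ A z.1) with hP
  by_cases hPne : P.Nonempty
  swap
  · -- no strict-slack pairs: product coupling works
    refine ⟨fun z => p z.1 * q z.2, fun z => mul_nonneg (hp _).le (hq _).le,
      fun x => ?_, fun y => ?_, fun x y h => ?_⟩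
    · show ∑ y, p x * q y = p x
      rw [← Finset.mul_sum, hqs, mul_one]
    · show ∑ x, p x * q y = q y
      rw [← Finset.sum_mul, hps, one_mul]
    · exfalso
      refine hPne ⟨(x, y), ?_⟩
      rw [hP, Finset.mem_filter]
      exact ⟨mem_univ _, hnotA x y h⟩
  -- main case
  set T : (X → Y → ℝ) → (Y → ℝ) := fun l y => ∑ x, p x * l x y with hT
  set Λ : Set (X → Y → ℝ) := {l | (∀ x y, 0 ≤ l x y ∧ l x y ≤ 1) ∧ (∀ x, ∑ y, l x y = 1) ∧
      (∀ x y, y ∉ A x → l x y = 0)} with hΛ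
  have hev : ∀ x y, Continuous fun l : X → Y → ℝ => l x y :=
    fun x y => (continuous_apply y).comp (continuous_apply x)
  have hTcont : Continuous T := continuous_pi fun y => continuous_finset_sum _ fun x _ =>
      continuous_const.mul (hev x y)
  have hΛclosed : IsClosed Λ := by
    rw [hΛ, Set.setOf_and, Set.setOf_and]
    refine IsClosed.inter ?_ (IsClosed.inter ?_ ?_)
    · rw [Set.setOf_forall]
      refine isClosed_iInter fun x => ?_
      rw [Set.setOf_forall]
      refine isClosed_iInter fun y => ?_
      rw [Set.setOf_and]
      exact (isClosed_le continuous_const (hev x y)).inter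
        (isClosed_le (hev x y) continuous_const)
    · rw [Set.setOf_forall]
      exact isClosed_iInter fun x =>
        isClosed_eq (continuous_finset_sum _ fun y _ => hev x y) continuous_const
    · rw [Set.setOf_forall]
      refine isClosed_iInter fun x => ?_
      rw [Set.setOf_forall]
      refine isClosed_iInter fun y => ?_
      by_cases hy : y ∈ A x
      · have : {l : X → Y → ℝ | y ∉ A x → l x y = 0} = Set.univ := by
          ext l; simp [hy]
        rw [this]; exact isClosed_univ
      · have : {l : X → Y → ℝ | y ∉ A x → l x y = 0} = {l | l x y = 0} := by
          ext l; simp [hy]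
        rw [this]; exact isClosed_eq (hev x y) continuous_const
  have hΛbdd : Bornology.IsBounded Λ := by
    refine (Metric.isBounded_closedBall (x := (0 : X → Y → ℝ)) (r := 1)).subset fun l hl => ?_
    rw [Metric.mem_closedBall, dist_zero_right]
    refine (pi_norm_le_iff_of_nonneg zero_le_one).mpr fun x =>
      (pi_norm_le_iff_of_nonneg zero_le_one).mpr fun y => ?_
    rw [Real.norm_eq_abs, abs_le]
    have := hl.1 x y
    constructor <;> linarith [this.1, this.2]
  have hKcpt : IsCompact (T '' Λ) :=
    (Metric.isCompact_of_isClosed_isBounded hΛclosed hΛbdd).image hTcont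
  have hKconv : Convex ℝ (T '' Λ) := by
    rintro g₁ ⟨l₁, hl₁, rfl⟩ g₂ ⟨l₂, hl₂, rfl⟩ a b ha hb hab
    refine ⟨fun x y => a * l₁ x y + b * l₂ x y, ⟨fun x y => ?_, fun x => ?_, fun x y h => ?_⟩, ?_⟩
    · constructor
      · exact add_nonneg (mul_nonneg ha (hl₁.1 x y).1) (mul_nonneg hb (hl₂.1 x y).1)
      · have h1 : a * l₁ x y ≤ a * 1 := mul_le_mul_of_nonneg_left (hl₁.1 x y).2 ha
        have h2 : b * l₂ x y ≤ b * 1 := mul_le_mul_of_nonneg_left (hl₂.1 x y).2 hb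
        show a * l₁ x y + b * l₂ x y ≤ 1
        linarith
    · show ∑ y, (a * l₁ x y + b * l₂ x y) = 1
      rw [Finset.sum_add_distrib, ← Finset.mul_sum, ← Finset.mul_sum, hl₁.2.1 x, hl₂.2.1 x]
      rw [mul_one, mul_one]; exact hab
    · show a * l₁ x y + b * l₂ x y = 0
      rw [hl₁.2.2 x y h, hl₂.2.2 x y h]; ring
    · funext y
      show (∑ x, p x * (a * l₁ x y + b * l₂ x y)) =
        a * (∑ x, p x * l₁ x y) + b * (∑ x, p x * l₂ x y)
      rw [Finset.mul_sum, Finset.mul_sum, ← Finset.sum_add_distrib]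
      exact Finset.sum_congr rfl fun x _ => by ring
  have hqK : q ∈ T '' Λ := by
    by_contra hqK
    obtain ⟨f, c, hfk, hcq⟩ := geometric_hahn_banach_closed_point hKconv hKcpt.isClosed hqK
    set w : Y → ℝ := fun y => f (fun j => if y = j then 1 else 0) with hw
    have hfrep : ∀ g : Y → ℝ, f g = ∑ y, g y * w y := by
      intro g
      conv_lhs => rw [pi_eq_sum_univ g]
      rw [map_sum]
      exact Finset.sum_congr rfl fun y _ => by rw [map_smul, smul_eq_mul]
    -- choose maximizers of w on A x
    have hch : ∀ x, ∃ yx, yx ∈ A x ∧ (A x).sup' (hAne x) w = w yx := fun x =>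
      Finset.exists_mem_eq_sup' (hAne x) w
    choose ys hysA hysw using hch
    -- the gap δ
    set δ : ℝ := P.inf' hPne (fun z => u z.1 - (Φ z - v z.2)) with hδ
    have hδpos : 0 < δ := by
      rw [hδ, Finset.lt_inf'_iff]
      rintro ⟨x, y⟩ hz
      rw [hP, Finset.mem_filter] at hz
      have h1 := le_Uv Φ v x y
      have h2 : u x ≠ Φ (x, y) - v y := fun h => hz.2 ((hmemA x y).mpr h)
      rw [← hu] at h1
      simp only
      rcases lt_or_eq_of_le h1 with h | h
      · linarith
      · exact absurd h.symm h2
    have hδle : ∀ x y, y ∉ A x → u x - (Φ (x, y) - v y) ≥ δ := by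
      intro x y hy
      have hyP : (x, y) ∈ P := by
        rw [hP, Finset.mem_filter]; exact ⟨mem_univ _, hy⟩
      rw [hδ]
      exact Finset.inf'_le (fun z => u z.1 - (Φ z - v z.2)) hyP
    set t : ℝ := δ / (2 * (‖w‖ + 1)) with ht
    have htpos : 0 < t := by
      rw [ht]; positivity
    have htD : t * (2 * (‖w‖ + 1)) = δ := by
      rw [ht]; field_simp
    have htw : ∀ y, t * |w y| ≤ δ / 2 := by
      intro y
      have h1 : |w y| ≤ ‖w‖ := by
        rw [← Real.norm_eq_abs]; exact norm_le_pi_norm w y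
      have h2 : t * |w y| ≤ t * ‖w‖ := mul_le_mul_of_nonneg_left h1 htpos.le
      nlinarith
    set vt : Y → ℝ := fun y => v y - t * w y with hvt
    -- key bound on Uv at perturbed vt
    have hkey : ∀ x, Uv Φ vt x ≤ u x + t * w (ys x) := by
      intro x
      unfold Uv
      refine Finset.sup'_le _ _ fun y _ => ?_
      have hws : ∀ y', y' ∈ A x → t * w y' ≤ t * w (ys x) := by
        intro y' hy'
        refine mul_le_mul_of_nonneg_left ?_ htpos.le
        rw [← hysw x]
        exact Finset.le_sup' w hy'
      show Φ (x, y) - (v y - t * w y) ≤ u x + t * w (ys x)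
      by_cases hy : y ∈ A x
      · have := (hmemA x y).mp hy
        have := hws y hy
        linarith
      · have h1 := hδle x y hy
        have h2 := htw y
        have h3 : t * w y ≤ t * |w y| :=
          mul_le_mul_of_nonneg_left (le_abs_self _) htpos.le
        have h4 : - (t * |w (ys x)|) ≤ t * w (ys x) := by
          have := mul_le_mul_of_nonneg_left (neg_abs_le (w (ys x))) htpos.le
          linarith
        have h5 := htw (ys x)
        linarith
    -- the element k of the image
    set l : X → Y → ℝ := fun x y => if y = ys x then 1 else 0 with hl
    have hlΛ : l ∈ Λ := by
      refine ⟨fun x y => ?_, fun x => ?_, fun x y h => ?_⟩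
      · rw [hl]; dsimp only; split <;> norm_num
      · rw [hl]; simp
      · rw [hl]; dsimp only
        rw [if_neg]
        rintro rfl
        exact h (hysA x)
    have hfk' : f (T l) < c := hfk _ ⟨l, hlΛ, rfl⟩
    have hfkval : f (T l) = ∑ x, p x * w (ys x) := by
      rw [hfrep]
      calc ∑ y, T l y * w y = ∑ y, ∑ x, p x * l x y * w y := by
            refine Finset.sum_congr rfl fun y _ => ?_
            rw [hT]; dsimp only; rw [Finset.sum_mul]
        _ = ∑ x, ∑ y, p x * l x y * w y := Finset.sum_comm
        _ = ∑ x, p x * w (ys x) := by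
            refine Finset.sum_congr rfl fun x _ => ?_
            rw [hl]; dsimp only
            simp [mul_ite, ite_mul]
    have hcq' : c < ∑ y, q y * w y := by
      rw [← hfrep q]; exact hcq
    -- contradiction with minimality of v
    have hs1 : ∑ x, p x * Uv Φ vt x ≤ ∑ x, p x * u x + t * ∑ x, p x * w (ys x) := by
      have h1 : ∑ x, p x * Uv Φ vt x ≤ ∑ x, (p x * u x + t * (p x * w (ys x))) :=
        Finset.sum_le_sum fun x _ => by
          calc p x * Uv Φ vt x ≤ p x * (u x + t * w (ys x)) :=
                mul_le_mul_of_nonneg_left (hkey x) (hp x).le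
            _ = p x * u x + t * (p x * w (ys x)) := by ring
      rw [Finset.sum_add_distrib, ← Finset.mul_sum] at h1
      exact h1
    have hs2 : ∑ y, q y * vt y = ∑ y, q y * v y - t * ∑ y, q y * w y := by
      rw [Finset.mul_sum, ← Finset.sum_sub_distrib]
      refine Finset.sum_congr rfl fun y _ => ?_
      rw [hvt]; dsimp only; ring
    have hneg : t * (∑ x, p x * w (ys x)) - t * (∑ y, q y * w y) < 0 := by
      have hlt : ∑ x, p x * w (ys x) < ∑ y, q y * w y := by
        rw [← hfkval]; exact hfk'.trans hcq'
      nlinarith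
    have hFvvt : Fv p q Φ vt < Fv p q Φ v := by
      unfold Fv
      rw [← hu]
      linarith [hs1, hs2, hneg]
    linarith [hmin vt, hFvvt]
  -- extract coupling from q ∈ T '' Λ
  obtain ⟨l, hlΛ, hTl⟩ := hqK
  refine ⟨fun z => p z.1 * l z.1 z.2, fun z => mul_nonneg (hp _).le (hlΛ.1 _ _).1,
    fun x => ?_, fun y => ?_, fun x y h => ?_⟩
  · show ∑ y, p x * l x y = p x
    rw [← Finset.mul_sum, hlΛ.2.1 x, mul_one]
  · exact congrFun hTl y
  · show p x * l x y = 0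
    rw [hlΛ.2.2 x y (hnotA x y h), mul_zero]

end KDual

theorem dual_attained_and_complementary_slackness
    {X Y : Type*} [Fintype X] [Fintype Y] [Nonempty X] [Nonempty Y]
    (p : X → ℝ) (q : Y → ℝ) (hp : ∀ x, 0 < p x) (hq : ∀ y, 0 < q y)
    (hps : ∑ x, p x = 1) (hqs : ∑ y, q y = 1) (Φ : X × Y → ℝ) :
    (∃ (u : X → ℝ) (v : Y → ℝ),
      (∀ x y, Φ (x, y) ≤ u x + v y) ∧
      IsLeast {s : ℝ | ∃ (u' : X → ℝ) (v' : Y → ℝ),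
          (∀ x y, Φ (x, y) ≤ u' x + v' y) ∧
          s = ∑ x, p x * u' x + ∑ y, q y * v' y}
        (∑ x, p x * u x + ∑ y, q y * v y)) ∧
    (∀ (u : X → ℝ) (v : Y → ℝ),
      (∀ x y, Φ (x, y) ≤ u x + v y) →
      IsLeast {s : ℝ | ∃ (u' : X → ℝ) (v' : Y → ℝ),
          (∀ x y, Φ (x, y) ≤ u' x + v' y) ∧
          s = ∑ x, p x * u' x + ∑ y, q y * v' y}
        (∑ x, p x * u x + ∑ y, q y * v y) →
      ∀ μ : X × Y → ℝ, IsCoupling p q μ →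
        (IsGreatest {m : ℝ | ∃ μ' : X × Y → ℝ, IsCoupling p q μ' ∧
              m = ∑ x, ∑ y, μ' (x, y) * Φ (x, y)}
            (∑ x, ∑ y, μ (x, y) * Φ (x, y))
          ↔ ∀ x y, Φ (x, y) < u x + v y → μ (x, y) = 0)) := by
  classical
  have hFv : ∀ v' : Y → ℝ,
      KDual.Fv p q Φ v' = ∑ x, p x * KDual.Uv Φ v' x + ∑ y, q y * v' y := fun _ => rfl
  have hfeasle : ∀ (u' : X → ℝ) (v' : Y → ℝ), (∀ x y, Φ (x, y) ≤ u' x + v' y) →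
      KDual.Fv p q Φ v' ≤ ∑ x, p x * u' x + ∑ y, q y * v' y := by
    intro u' v' hf'
    rw [hFv]
    have hUle := KDual.Uv_le Φ v' u' hf'
    have h := Finset.sum_le_sum
      (fun x (_ : x ∈ Finset.univ) => mul_le_mul_of_nonneg_left (hUle x) (hp x).le)
    linarith
  constructor
  · obtain ⟨v₀, hv₀⟩ := KDual.exists_min_Fv p q hp hq hps hqs Φ
    refine ⟨KDual.Uv Φ v₀, v₀, KDual.Uv_feasible Φ v₀,
      ⟨⟨KDual.Uv Φ v₀, v₀, KDual.Uv_feasible Φ v₀, rfl⟩, ?_⟩⟩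
    rintro s ⟨u', v', hf', rfl⟩
    calc ∑ x, p x * KDual.Uv Φ v₀ x + ∑ y, q y * v₀ y
        = KDual.Fv p q Φ v₀ := rfl
      _ ≤ KDual.Fv p q Φ v' := hv₀ v'
      _ ≤ ∑ x, p x * u' x + ∑ y, q y * v' y := hfeasle u' v' hf'
  · intro u v hfeas hleast μ hμ
    obtain ⟨hμ0, hμ1, hμ2⟩ := hμ
    have hle2 : ∑ x, p x * u x + ∑ y, q y * v y ≤ KDual.Fv p q Φ v :=
      hleast.2 ⟨KDual.Uv Φ v, v, KDual.Uv_feasible Φ v, rfl⟩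
    have hval : KDual.Fv p q Φ v = ∑ x, p x * u x + ∑ y, q y * v y :=
      le_antisymm (hfeasle u v hfeas) hle2
    have hmin : ∀ v', KDual.Fv p q Φ v ≤ KDual.Fv p q Φ v' := by
      intro v'
      have hmem : KDual.Fv p q Φ v' ∈ {s : ℝ | ∃ (u' : X → ℝ) (v' : Y → ℝ),
          (∀ x y, Φ (x, y) ≤ u' x + v' y) ∧ s = ∑ x, p x * u' x + ∑ y, q y * v' y} :=
        ⟨KDual.Uv Φ v', v', KDual.Uv_feasible Φ v', rfl⟩
      have := hleast.2 hmem
      linarith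
    obtain ⟨pp, hpp0, hpp1, hpp2, hpps⟩ :=
      KDual.exists_complementary_coupling p q hp hq hps hqs Φ v hmin
    have hppval : ∑ x, ∑ y, pp (x, y) * Φ (x, y) = KDual.Fv p q Φ v :=
      KDual.slack_value p q Φ pp hpp1 hpp2 (KDual.Uv Φ v) v (KDual.Uv_feasible Φ v) hpps
    constructor
    · intro hgr x y hlt
      have h1 : ∑ x, ∑ y, pp (x, y) * Φ (x, y) ≤ ∑ x, ∑ y, μ (x, y) * Φ (x, y) :=
        hgr.2 ⟨pp, ⟨hpp0, hpp1, hpp2⟩, rfl⟩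
      have h2 := KDual.weak_duality p q Φ μ hμ0 hμ1 hμ2 u v hfeas
      have hμval : ∑ x, ∑ y, μ (x, y) * Φ (x, y) = ∑ x, p x * u x + ∑ y, q y * v y := by
        linarith
      have hsum : ∑ x, ∑ y, μ (x, y) * (u x + v y) = ∑ x, ∑ y, μ (x, y) * Φ (x, y) := by
        rw [KDual.coupling_split p q μ hμ1 hμ2 u v, hμval]
      by_contra hne
      have hpos : 0 < μ (x, y) := lt_of_le_of_ne (hμ0 (x, y)) (Ne.symm hne)
      have hterm : ∀ x' y', μ (x', y') * Φ (x', y') ≤ μ (x', y') * (u x' + v y') := fun x' y' =>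
        mul_le_mul_of_nonneg_left (hfeas x' y') (hμ0 (x', y'))
      have hstrict : μ (x, y) * Φ (x, y) < μ (x, y) * (u x + v y) :=
        mul_lt_mul_of_pos_left hlt hpos
      have hlt2 : ∑ x, ∑ y, μ (x, y) * Φ (x, y) < ∑ x, ∑ y, μ (x, y) * (u x + v y) := by
        refine Finset.sum_lt_sum (fun x' _ => Finset.sum_le_sum fun y' _ => hterm x' y')
          ⟨x, Finset.mem_univ x, ?_⟩
        exact Finset.sum_lt_sum (fun y' _ => hterm x y') ⟨y, Finset.mem_univ y, hstrict⟩
      linarith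
    · intro hslack
      have heq := KDual.slack_value p q Φ μ hμ1 hμ2 u v hfeas hslack
      constructor
      · exact ⟨μ, ⟨hμ0, hμ1, hμ2⟩, rfl⟩
      · rintro m ⟨μ', ⟨h0', h1', h2'⟩, rfl⟩
        have := KDual.weak_duality p q Φ μ' h0' h1' h2' u v hfeas
        linarith
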